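/- Fix constants w > 0, P > 0, and c > 0. The function u ↦ (w/u)·log(1 + P·u/(c·w)) is strictly decreasing and strictly convex on (0,∞). -/

import Mathlib

open Real Set Filter

private lemma key_log_ineq {y : ℝ} (hy : 1 < y) :
    (1 - 1/y) + (1 - 1/y)^2 / 2 < Real.log y := by
  set F : ℝ → ℝ := fun t => Real.log t - ((1 - 1/t) + (1 - 1/t)^2 / 2) with hF
  have hder : ∀ x ∈ interior (Ici (1:ℝ)), HasDerivAt F ((x-1)^2 / x^3) x := by
    intro x hx
    rw [interior_Ici] at hx
    have hx0 : x ≠ 0 := by have : (0:ℝ) < x := lt_trans one_pos hx; linarith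
    have h1 : HasDerivAt (fun t : ℝ => 1 - 1/t) (1/x^2) x := by
      have := ((hasDerivAt_inv hx0).const_sub 1)
      simpa [one_div] using this
    have h2 : HasDerivAt (fun t : ℝ => (1 - 1/t)^2) (2 * (1 - 1/x) * (1/x^2)) x := by
      have := h1.fun_pow 2
      simpa [mul_comm, mul_assoc, mul_left_comm] using this
    have h3 : HasDerivAt F (x⁻¹ - (1/x^2 + (2 * (1 - 1/x) * (1/x^2))/2)) x :=
      (Real.hasDerivAt_log hx0).sub (h1.add (h2.div_const 2))
    convert h3 using 1
    have hx2 : x^2 ≠ 0 := pow_ne_zero _ hx0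
    have hx3 : x^3 ≠ 0 := pow_ne_zero _ hx0
    field_simp
    ring
  have hcont : ContinuousOn F (Ici (1:ℝ)) := by
    have hsub : Ici (1:ℝ) ⊆ {0}ᶜ := by
      intro x hx; simp only [mem_compl_iff, mem_singleton_iff]
      have : (1:ℝ) ≤ x := hx; intro h; rw [h] at this; linarith
    have h0 : ∀ x ∈ Ici (1:ℝ), x ≠ 0 := fun x hx => hsub hx
    apply ContinuousOn.sub (Real.continuousOn_log.mono hsub)
    apply ContinuousOn.add
    · exact continuousOn_const.sub (continuousOn_const.div continuousOn_id h0)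
    · exact (((continuousOn_const.sub (continuousOn_const.div continuousOn_id h0)).pow 2).div_const 2)
  have hmono : StrictMonoOn F (Ici (1:ℝ)) := by
    apply strictMonoOn_of_deriv_pos (convex_Ici 1) hcont
    intro x hx
    rw [(hder x hx).deriv]
    rw [interior_Ici] at hx
    have hx1 : 1 < x := hx
    have h1 : 0 < x := lt_trans one_pos hx1
    have h2 : x - 1 ≠ 0 := by intro h; rw [sub_eq_zero] at h; rw [h] at hx1; exact lt_irrefl 1 hx1
    positivity
  have h01 := hmono (self_mem_Ici) (le_of_lt hy : y ∈ Ici 1) hy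
  have hF1 : F 1 = 0 := by simp [hF]
  rw [hF1] at h01
  simp only [hF] at h01
  linarith

theorem fdma_rate_anti_convex_in_users
    (w P c : ℝ) (hw : w > 0) (hP : P > 0) (hc : c > 0) :
    StrictAntiOn (fun u : ℝ => (w / u) * Real.log (1 + P * u / (c * w))) (Set.Ioi (0:ℝ)) ∧
    StrictConvexOn ℝ (Set.Ioi (0:ℝ))
      (fun u : ℝ => (w / u) * Real.log (1 + P * u / (c * w))) := by
  have hcw : (0:ℝ) < c * w := by positivity
  set a : ℝ := P / (c * w) with ha_def
  have ha : 0 < a := by positivity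
  have hfun : (fun u : ℝ => (w / u) * Real.log (1 + P * u / (c * w)))
      = fun u : ℝ => (w / u) * Real.log (1 + a * u) := by
    funext u
    have : P * u / (c * w) = a * u := by rw [ha_def]; ring
    rw [this]
  rw [hfun]
  set f : ℝ → ℝ := fun u => (w / u) * Real.log (1 + a * u) with hf_def
  set f' : ℝ → ℝ := fun u => -(w / u^2) * Real.log (1 + a * u) + (w / u) * (a / (1 + a * u))
    with hf'_def
  set f'' : ℝ → ℝ := fun u =>
      (2*w/u^3) * Real.log (1 + a * u) + (-(w / u^2)) * (a / (1 + a * u))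
      + ((-(w / u^2)) * (a / (1 + a * u)) + (w / u) * (-(a^2 / (1 + a * u)^2))) with hf''_def
  -- basic facts for u > 0
  have hy_pos : ∀ u : ℝ, 0 < u → 0 < 1 + a * u := fun u hu => by positivity
  have hy_gt : ∀ u : ℝ, 0 < u → 1 < 1 + a * u := fun u hu => by nlinarith
  -- derivative of f
  have hd1 : ∀ u : ℝ, u ∈ Ioi (0:ℝ) → HasDerivAt f (f' u) u := by
    intro u hu
    have hu0 : (0:ℝ) < u := hu
    have hune : u ≠ 0 := ne_of_gt hu0
    have hy := hy_pos u hu0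
    have hg : HasDerivAt (fun t : ℝ => 1 + a * t) a u := by
      simpa using ((hasDerivAt_id u).const_mul a).const_add 1
    have hlog : HasDerivAt (fun t : ℝ => Real.log (1 + a * t)) (a / (1 + a * u)) u := by
      simpa [div_eq_mul_inv, mul_comm] using hg.log (ne_of_gt hy)
    have hinv : HasDerivAt (fun t : ℝ => w / t) (-(w / u^2)) u := by
      have := (hasDerivAt_inv hune).const_mul w
      simpa [div_eq_mul_inv, neg_mul, mul_comm, mul_assoc, mul_left_comm] using this
    simpa [hf'_def] using hinv.fun_mul hlog
  -- derivative of f'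
  have hd2 : ∀ u : ℝ, u ∈ Ioi (0:ℝ) → HasDerivAt f' (f'' u) u := by
    intro u hu
    have hu0 : (0:ℝ) < u := hu
    have hune : u ≠ 0 := ne_of_gt hu0
    have hy := hy_pos u hu0
    have hyne : (1 + a * u) ≠ 0 := ne_of_gt hy
    have hg : HasDerivAt (fun t : ℝ => 1 + a * t) a u := by
      simpa using ((hasDerivAt_id u).const_mul a).const_add 1
    have hlog : HasDerivAt (fun t : ℝ => Real.log (1 + a * t)) (a / (1 + a * u)) u := by
      simpa [div_eq_mul_inv, mul_comm] using hg.log hyne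
    have hinv : HasDerivAt (fun t : ℝ => w / t) (-(w / u^2)) u := by
      have := (hasDerivAt_inv hune).const_mul w
      simpa [div_eq_mul_inv, neg_mul, mul_comm, mul_assoc, mul_left_comm] using this
    -- derivative of -(w/u^2)
    have hA : HasDerivAt (fun t : ℝ => -(w / t^2)) (2*w/u^3) u := by
      have hsq : HasDerivAt (fun t : ℝ => t^2) (2*u) u := by
        simpa using hasDerivAt_pow 2 u
      have h := ((hsq.fun_inv (pow_ne_zero 2 hune)).const_mul w).fun_neg
      refine h.congr_deriv ?_
      field_simp
    -- derivative of a/(1+a t)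
    have hB : HasDerivAt (fun t : ℝ => a / (1 + a * t)) (-(a^2 / (1 + a * u)^2)) u := by
      have h := (hg.fun_inv hyne).const_mul a
      refine h.congr_deriv ?_
      field_simp
    have h1 : HasDerivAt (fun t : ℝ => -(w / t^2) * Real.log (1 + a * t))
        ((2*w/u^3) * Real.log (1 + a * u) + (-(w / u^2)) * (a / (1 + a * u))) u := hA.mul hlog
    have h2 : HasDerivAt (fun t : ℝ => (w / t) * (a / (1 + a * t)))
        ((-(w / u^2)) * (a / (1 + a * u)) + (w / u) * (-(a^2 / (1 + a * u)^2))) u :=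
      hinv.mul hB
    simpa [hf'_def, hf''_def] using h1.fun_add h2
  -- continuity of f on Ioi 0
  have hfc : ContinuousOn f (Ioi (0:ℝ)) := fun x hx =>
    (hd1 x hx).continuousAt.continuousWithinAt
  -- f' is negative on Ioi 0
  have hneg : ∀ u : ℝ, u ∈ Ioi (0:ℝ) → f' u < 0 := by
    intro u hu
    have hu0 : (0:ℝ) < u := hu
    have hy := hy_pos u hu0
    have hy1 := hy_gt u hu0
    set y := 1 + a * u with hy_def
    have hlog_lb : 1 - 1/y < Real.log y := by
      have h := Real.log_lt_sub_one_of_pos (x := 1/y) (by positivity)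
        (by
          intro h
          rw [div_eq_one_iff_eq (ne_of_gt hy)] at h
          linarith)
      rw [Real.log_div one_ne_zero (ne_of_gt hy), Real.log_one] at h
      linarith
    have key : a * u / y < Real.log y := by
      have : 1 - 1/y = a * u / y := by
        rw [hy_def]; field_simp; ring
      linarith [hlog_lb, this ▸ hlog_lb]
    have hfact : f' u = (w / u^2) * (a * u / y - Real.log y) := by
      simp only [hf'_def]
      rw [← hy_def]
      field_simp
      ring
    rw [hfact]
    have h1 : (0:ℝ) < w / u^2 := by positivity
    have h2 : a * u / y - Real.log y < 0 := by linarith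
    exact mul_neg_of_pos_of_neg h1 h2
  -- f'' is positive on Ioi 0
  have hpos : ∀ u : ℝ, u ∈ Ioi (0:ℝ) → 0 < f'' u := by
    intro u hu
    have hu0 : (0:ℝ) < u := hu
    have hy := hy_pos u hu0
    have hy1 := hy_gt u hu0
    set y := 1 + a * u with hy_def
    have hkey := key_log_ineq hy1
    have ht : 1 - 1/y = a * u / y := by rw [hy_def]; field_simp; ring
    rw [ht] at hkey
    have hfact : f'' u = (w / u^3) * (2 * Real.log y - 2 * (a*u/y) - (a*u/y)^2) := by
      simp only [hf''_def]
      rw [← hy_def]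
      field_simp
      ring
    rw [hfact]
    have h1 : (0:ℝ) < w / u^3 := by positivity
    have h2 : 0 < 2 * Real.log y - 2 * (a*u/y) - (a*u/y)^2 := by nlinarith [hkey]
    exact mul_pos h1 h2
  have hint : interior (Ioi (0:ℝ)) = Ioi (0:ℝ) := interior_Ioi
  constructor
  · apply strictAntiOn_of_deriv_neg (convex_Ioi 0) hfc
    intro x hx
    rw [hint] at hx
    rw [(hd1 x hx).deriv]
    exact hneg x hx
  · apply strictConvexOn_of_deriv2_pos (convex_Ioi 0) hfc
    intro x hx
    rw [hint] at hx
    have hev : deriv f =ᶠ[nhds x] f' := by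
      filter_upwards [Ioi_mem_nhds hx] with y hy using (hd1 y hy).deriv
    have : (deriv^[2] f) x = deriv f' x := by
      simp only [Function.iterate_succ, Function.iterate_zero, Function.comp,
        Function.id_def]
      exact hev.deriv_eq
    rw [this, (hd2 x hx).deriv]
    exact hpos x hx
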